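/- arXiv:1611.00510 — 2 statements merged into one kernel-verified Lean document; each statement's English description precedes it below -/
import Mathlib

section
/- Bridge operation, outcome (|0⟩+i|1⟩)/√2: let ι : ℂ²⊗ℂ² → ℂ²⊗ℂ²⊗ℂ² be the linear map inserting the state |+⟩ as the middle tensor factor (ι(|u⟩⊗|w⟩) = |u⟩⊗|+⟩⊗|w⟩), let Λ(Z)₁₂ and Λ(Z)₂₃ be controlled-Z gates between qubits 1,2 and qubits 2,3 respectively, and let ⟨m| be the functional on the middle qubit given by ⟨m|v⟩ = (⟨0|v⟩ − i⟨1|v⟩)/√2. Then for every |Ψ⟩ ∈ ℂ²⊗ℂ², (I⊗⟨m|⊗I) Λ(Z)₁₂ Λ(Z)₂₃ ι(|Ψ⟩) = (e^{−iπ/4}/√2) (S⊗S) Λ(Z) |Ψ⟩. In particular, a controlled-Z between qubits 1 and 3 is implemented up to S⊗S and a global phase, with normalization 1/√2. -/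
/-!
Bridge operation, outcome (|0⟩+i|1⟩)/√2:
(I⊗⟨m|⊗I) Λ(Z)₁₂ Λ(Z)₂₃ ι(|Ψ⟩) = (e^{−iπ/4}/√2) (S⊗S) Λ(Z) |Ψ⟩,
where ι inserts |+⟩ as the middle tensor factor and ⟨m|v⟩ = (⟨0|v⟩ − i⟨1|v⟩)/√2.
-/

noncomputable section

/-- The map `ι : ℂ²⊗ℂ² → ℂ²⊗ℂ²⊗ℂ²` inserting `|+⟩` as the middle tensor
factor: `ι(|u⟩⊗|w⟩) = |u⟩⊗|+⟩⊗|w⟩`. -/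
def insertPlusMid (Ψ : Fin 2 × Fin 2 → ℂ) : Fin 2 × Fin 2 × Fin 2 → ℂ :=
  fun p => (Real.sqrt 2 : ℂ)⁻¹ * Ψ (p.1, p.2.2)

/-- The controlled-Z gate `Λ(Z)₁₂` between qubits 1 and 2 of three qubits. -/
def CZ12 (v : Fin 2 × Fin 2 × Fin 2 → ℂ) : Fin 2 × Fin 2 × Fin 2 → ℂ :=
  fun p => (if p.1 = 1 ∧ p.2.1 = 1 then (-1 : ℂ) else 1) * v p

/-- The controlled-Z gate `Λ(Z)₂₃` between qubits 2 and 3 of three qubits. -/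
def CZ23 (v : Fin 2 × Fin 2 × Fin 2 → ℂ) : Fin 2 × Fin 2 × Fin 2 → ℂ :=
  fun p => (if p.2.1 = 1 ∧ p.2.2 = 1 then (-1 : ℂ) else 1) * v p

/-- The partial contraction `(I⊗⟨m|⊗I)` against the middle qubit, where
`⟨m|v⟩ = (⟨0|v⟩ − i⟨1|v⟩)/√2`. -/
def braMmid (v : Fin 2 × Fin 2 × Fin 2 → ℂ) : EuclideanSpace ℂ (Fin 2 × Fin 2) :=
  WithLp.toLp 2 (fun q : Fin 2 × Fin 2 => (Real.sqrt 2 : ℂ)⁻¹ * (v (q.1, 0, q.2) - Complex.I * v (q.1, 1, q.2)))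

/-- The gate `S ⊗ S` on two qubits, where `S = diag(1, i)`. -/
def SS (w : Fin 2 × Fin 2 → ℂ) : Fin 2 × Fin 2 → ℂ :=
  fun q => Complex.I ^ (q.1 : ℕ) * Complex.I ^ (q.2 : ℕ) * w q

/-- The controlled-Z gate `Λ(Z)` on two qubits. -/
def CZ (w : Fin 2 × Fin 2 → ℂ) : Fin 2 × Fin 2 → ℂ :=
  fun q => (if q.1 = 1 ∧ q.2 = 1 then (-1 : ℂ) else 1) * w q

theorem hexp : Complex.exp (-(Complex.I * Real.pi / 4)) = (Real.sqrt 2 : ℂ)⁻¹ * (1 - Complex.I) := by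
  have h : -(Complex.I * Real.pi / 4) = ((-(Real.pi/4) : ℝ) : ℂ) * Complex.I := by push_cast; ring
  rw [h, Complex.exp_mul_I, ← Complex.ofReal_cos, ← Complex.ofReal_sin,
    Real.cos_neg, Real.sin_neg, Real.cos_pi_div_four, Real.sin_pi_div_four]
  have h2 : (Real.sqrt 2 : ℂ) ≠ 0 := by
    simpa using Real.sqrt_pos.mpr (by norm_num : (0:ℝ) < 2)
  have hsq : (Real.sqrt 2 : ℂ) * Real.sqrt 2 = 2 := by
    rw [← Complex.ofReal_mul, Real.mul_self_sqrt (by norm_num : (0:ℝ) ≤ 2)]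
    norm_num
  push_cast
  field_simp
  linear_combination (1 - Complex.I) * hsq

/-- Bridge operation, outcome `(|0⟩+i|1⟩)/√2`: a controlled-Z between qubits
1 and 3 is implemented up to `S⊗S`, a global phase `e^{−iπ/4}`, and
normalization `1/√2`. -/
theorem bridge_operation_outcome_zero (Ψ : Fin 2 × Fin 2 → ℂ) :
    braMmid (CZ12 (CZ23 (insertPlusMid Ψ))) =
      (Complex.exp (-(Complex.I * Real.pi / 4)) * (Real.sqrt 2 : ℂ)⁻¹) • SS (CZ Ψ) := by
  have h2 : (Real.sqrt 2 : ℂ) ≠ 0 := by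
    simpa using Real.sqrt_pos.mpr (by norm_num : (0:ℝ) < 2)
  have hsq : (Real.sqrt 2 : ℂ) * Real.sqrt 2 = 2 := by
    rw [← Complex.ofReal_mul, Real.mul_self_sqrt (by norm_num : (0:ℝ) ≤ 2)]
    norm_num
  funext q
  obtain ⟨a, b⟩ := q
  rw [hexp]
  fin_cases a <;> fin_cases b <;>
    simp only [braMmid, WithLp.ofLp_toLp, CZ12, CZ23, insertPlusMid, SS, CZ, Pi.smul_apply, smul_eq_mul] <;>
    norm_num <;> field_simp <;> ring_nf <;>
    first
      | rfl
      | linear_combination (Ψ (0, 0)) * hsq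
      | linear_combination (Ψ (0, 1)) * hsq
      | linear_combination Complex.I * (Ψ (0, 1)) * hsq
      | linear_combination (Ψ (1, 0)) * hsq
      | linear_combination Complex.I * (Ψ (1, 0)) * hsq
      | linear_combination (Ψ (1, 1)) * hsq
      | linear_combination -(Ψ (1, 1)) * hsq
      | linear_combination Complex.I * (Ψ (1, 1)) * hsq
      | linear_combination -Complex.I * (Ψ (1, 1)) * hsq
      | linear_combination Complex.I * (Ψ (1, 1)) * hsq + (Ψ (0, 1)) * Complex.I_sq
      | linear_combination Complex.I * (Ψ (1, 1)) * hsq + (Ψ (1, 0)) * Complex.I_sq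
      | linear_combination (Ψ (0, 1)) * Complex.I_sq
      | linear_combination (Ψ (1, 0)) * Complex.I_sq

end
end

section
/- Bridge operation, outcome (|0⟩−i|1⟩)/√2: with ι, Λ(Z)₁₂, Λ(Z)₂₃ as in the bridge operation and ⟨m′| the functional on the middle qubit given by ⟨m′|v⟩ = (⟨0|v⟩ + i⟨1|v⟩)/√2, for every |Ψ⟩ ∈ ℂ²⊗ℂ², (I⊗⟨m′|⊗I) Λ(Z)₁₂ Λ(Z)₂₃ ι(|Ψ⟩) = (e^{iπ/4}/√2) (S†⊗S†) Λ(Z) |Ψ⟩. Moreover, for every unit vector |Ψ⟩ ∈ ℂ²⊗ℂ², each of the two outcomes of this measurement of the middle qubit occurs with probability exactly 1/2. -/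
/-!
Bridge operation, outcome (|0⟩−i|1⟩)/√2:
(I⊗⟨m′|⊗I) Λ(Z)₁₂ Λ(Z)₂₃ ι(|Ψ⟩) = (e^{iπ/4}/√2) (S†⊗S†) Λ(Z) |Ψ⟩,
where ι inserts |+⟩ as the middle tensor factor and ⟨m′|v⟩ = (⟨0|v⟩ + i⟨1|v⟩)/√2;
moreover, for every unit vector |Ψ⟩ each of the two outcomes of the
measurement of the middle qubit occurs with probability exactly 1/2.
-/

noncomputable section

/-- The partial contraction `(I⊗⟨m′|⊗I)` against the middle qubit, where
`⟨m′|v⟩ = (⟨0|v⟩ + i⟨1|v⟩)/√2`. -/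
def braM'mid (v : Fin 2 × Fin 2 × Fin 2 → ℂ) : EuclideanSpace ℂ (Fin 2 × Fin 2) :=
  WithLp.toLp 2 (fun q : Fin 2 × Fin 2 => (Real.sqrt 2 : ℂ)⁻¹ * (v (q.1, 0, q.2) + Complex.I * v (q.1, 1, q.2)))

/-- The gate `S† ⊗ S†` on two qubits, where `S† = diag(1, −i)`. -/
def SdagSdag (w : Fin 2 × Fin 2 → ℂ) : Fin 2 × Fin 2 → ℂ :=
  fun q => (-Complex.I) ^ (q.1 : ℕ) * (-Complex.I) ^ (q.2 : ℕ) * w q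

lemma h2c : ((Real.sqrt 2 : ℝ) : ℂ) * ((Real.sqrt 2 : ℝ) : ℂ) = 2 := by
  rw [← Complex.ofReal_mul, Real.mul_self_sqrt (by norm_num)]; norm_num

lemma sqrt2_inv_sq : ((Real.sqrt 2 : ℂ))⁻¹ * (Real.sqrt 2 : ℂ)⁻¹ = 1/2 := by
  rw [← mul_inv, ← Complex.ofReal_mul, Real.mul_self_sqrt (by norm_num)]
  norm_num

lemma exp_pi4 : Complex.exp (Complex.I * Real.pi / 4) =
    (Real.sqrt 2 : ℂ)⁻¹ * (1 + Complex.I) := by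
  have h : Complex.I * (Real.pi : ℂ) / 4 = ((Real.pi / 4 : ℝ) : ℂ) * Complex.I := by
    push_cast; ring
  rw [h, Complex.exp_mul_I, ← Complex.ofReal_cos, ← Complex.ofReal_sin,
    Real.cos_pi_div_four, Real.sin_pi_div_four]
  have hs : ((Real.sqrt 2 : ℝ) : ℂ) ≠ 0 :=
    Complex.ofReal_ne_zero.mpr (by positivity)
  push_cast
  field_simp
  linear_combination (1 + Complex.I) * h2c

lemma pointM' (Ψ : Fin 2 × Fin 2 → ℂ) (q : Fin 2 × Fin 2) :
    braM'mid (CZ12 (CZ23 (insertPlusMid Ψ))) q =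
      (1/2 : ℂ) * (1 + (-1 : ℂ) ^ ((q.1 : ℕ) + (q.2 : ℕ)) * Complex.I) * Ψ q := by
  obtain ⟨a, b⟩ := q
  fin_cases a <;> fin_cases b <;>
    simp [braM'mid, CZ12, CZ23, insertPlusMid] <;>
    field_simp <;> rw [sq, h2c] <;> ring

lemma pointM (Ψ : Fin 2 × Fin 2 → ℂ) (q : Fin 2 × Fin 2) :
    braMmid (CZ12 (CZ23 (insertPlusMid Ψ))) q =
      (1/2 : ℂ) * (1 - (-1 : ℂ) ^ ((q.1 : ℕ) + (q.2 : ℕ)) * Complex.I) * Ψ q := by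
  obtain ⟨a, b⟩ := q
  fin_cases a <;> fin_cases b <;>
    simp [braMmid, CZ12, CZ23, insertPlusMid] <;>
    field_simp <;> rw [sq, h2c] <;> ring

lemma part1point (Ψ : Fin 2 × Fin 2 → ℂ) (q : Fin 2 × Fin 2) :
    (1/2 : ℂ) * (1 + (-1 : ℂ) ^ ((q.1 : ℕ) + (q.2 : ℕ)) * Complex.I) * Ψ q =
      (((Real.sqrt 2 : ℂ)⁻¹ * (1 + Complex.I)) * (Real.sqrt 2 : ℂ)⁻¹) •
        SdagSdag (CZ Ψ) q := by
  simp only [Pi.smul_apply, smul_eq_mul, SdagSdag, CZ]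
  obtain ⟨a, b⟩ := q
  generalize Ψ (a, b) = z
  fin_cases a <;> fin_cases b <;>
    simp only [Fin.val_zero, Fin.val_one, Fin.isValue]
  · rw [if_neg (by decide)]
    linear_combination (-(1 + Complex.I) * z) * sqrt2_inv_sq
  · rw [if_neg (by decide)]
    linear_combination (-(1 - Complex.I) * z) * sqrt2_inv_sq +
      ((Real.sqrt 2 : ℂ)⁻¹ * (Real.sqrt 2 : ℂ)⁻¹ * z) * Complex.I_sq
  · rw [if_neg (by decide)]
    linear_combination (-(1 - Complex.I) * z) * sqrt2_inv_sq +
      ((Real.sqrt 2 : ℂ)⁻¹ * (Real.sqrt 2 : ℂ)⁻¹ * z) * Complex.I_sq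
  · rw [if_pos ⟨rfl, rfl⟩]
    linear_combination (-(1 + Complex.I) * z) * sqrt2_inv_sq +
      ((1 + Complex.I) * (Real.sqrt 2 : ℂ)⁻¹ * (Real.sqrt 2 : ℂ)⁻¹ * z) * Complex.I_sq

lemma coef_norm_plus : ‖(1/2 : ℂ) * (1 + Complex.I)‖ ^ 2 = 1/2 := by
  rw [Complex.sq_norm, Complex.normSq_mul]
  simp [Complex.normSq_apply]; norm_num

lemma coef_norm_minus : ‖(1/2 : ℂ) * (1 - Complex.I)‖ ^ 2 = 1/2 := by
  rw [Complex.sq_norm, Complex.normSq_mul]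
  simp [Complex.normSq_apply]; norm_num

lemma norm_half (Ψ : EuclideanSpace ℂ (Fin 2 × Fin 2)) (hΨ : ‖Ψ‖ = 1)
    (v : EuclideanSpace ℂ (Fin 2 × Fin 2))
    (hv : ∀ q, ‖v q‖ ^ 2 = 1/2 * ‖Ψ q‖ ^ 2) : ‖v‖ ^ 2 = 1/2 := by
  have hsum : ∑ q : Fin 2 × Fin 2, ‖Ψ q‖ ^ 2 = 1 := by
    rw [EuclideanSpace.norm_eq] at hΨ
    rwa [Real.sqrt_eq_one] at hΨ
  rw [EuclideanSpace.norm_eq, Real.sq_sqrt (by positivity)]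
  calc ∑ q : Fin 2 × Fin 2, ‖v q‖ ^ 2
      = ∑ q : Fin 2 × Fin 2, 1/2 * ‖Ψ q‖ ^ 2 :=
        Finset.sum_congr rfl fun q _ => hv q
    _ = 1/2 * ∑ q : Fin 2 × Fin 2, ‖Ψ q‖ ^ 2 := by rw [Finset.mul_sum]
    _ = 1/2 := by rw [hsum]; norm_num

/-- Bridge operation, outcome `(|0⟩−i|1⟩)/√2`, together with the fact that
each of the two outcomes of the middle-qubit measurement occurs with
probability exactly `1/2` on every unit input vector. -/
theorem bridge_operation_outcome_one_and_probabilities :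
    (∀ Ψ : Fin 2 × Fin 2 → ℂ,
      braM'mid (CZ12 (CZ23 (insertPlusMid Ψ))) =
        (Complex.exp (Complex.I * Real.pi / 4) * (Real.sqrt 2 : ℂ)⁻¹) •
          SdagSdag (CZ Ψ)) ∧
    ∀ Ψ : EuclideanSpace ℂ (Fin 2 × Fin 2), ‖Ψ‖ = 1 →
      ‖braMmid (CZ12 (CZ23 (insertPlusMid Ψ)))‖ ^ 2 = 1 / 2 ∧
        ‖braM'mid (CZ12 (CZ23 (insertPlusMid Ψ)))‖ ^ 2 = 1 / 2 := by
  constructor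
  · intro Ψ
    funext q
    rw [exp_pi4]
    exact (pointM' Ψ q).trans (part1point Ψ q)
  · intro Ψ hΨ
    constructor
    · refine norm_half Ψ hΨ _ fun q => ?_
      rw [pointM Ψ q, norm_mul, mul_pow]
      congr 1
      rcases Nat.even_or_odd ((q.1 : ℕ) + (q.2 : ℕ)) with he | ho
      · rw [he.neg_one_pow]
        simpa using coef_norm_minus
      · rw [ho.neg_one_pow]
        simpa [sub_neg_eq_add] using coef_norm_plus
    · refine norm_half Ψ hΨ _ fun q => ?_
      rw [pointM' Ψ q, norm_mul, mul_pow]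
      congr 1
      rcases Nat.even_or_odd ((q.1 : ℕ) + (q.2 : ℕ)) with he | ho
      · rw [he.neg_one_pow]
        simpa using coef_norm_plus
      · rw [ho.neg_one_pow]
        simpa [← sub_eq_add_neg] using coef_norm_minus

end
end
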